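/- Fix A > 0 and for B > 0 define λ*₀(B) := (3A/2)·[1 − 3(√B − tanh(√B))/(B·tanh(√B))]^{−1}. Then 0 < 3(√B − tanh(√B))/(B·tanh(√B)) < 1 for every B > 0 (so λ*₀(B) is well defined and positive), the map B ↦ λ*₀(B) is strictly decreasing on (0,∞), and λ*₀(B) → 3A/2 as B → ∞. -/

import Mathlib

open Real

/-- The squared maximal sloshing frequency `λ*₀(B)` for `α = 0` with surface tension. -/
noncomputable def lamStar0 (A B : ℝ) : ℝ :=
  (3 * A / 2) * (1 - 3 * (Real.sqrt B - Real.tanh (Real.sqrt B)) /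
    (B * Real.tanh (Real.sqrt B)))⁻¹

/-- generic positivity-from-derivative helper -/
private lemma pos_of_deriv_pos (f f' : ℝ → ℝ) (hd : ∀ x, HasDerivAt f (f' x) x)
    (h0 : f 0 = 0) (hp : ∀ x, 0 < x → 0 < f' x) : ∀ x, 0 < x → 0 < f x := by
  intro x hx
  have hc : Continuous f := continuous_iff_continuousAt.2 fun y => (hd y).continuousAt
  have hm : StrictMonoOn f (Set.Ici 0) := by
    apply strictMonoOn_of_deriv_pos (convex_Ici 0) hc.continuousOn
    intro y hy
    rw [interior_Ici, Set.mem_Ioi] at hy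
    rw [(hd y).deriv]
    exact hp y hy
  have := hm Set.self_mem_Ici (Set.mem_Ici.2 hx.le) hx
  rwa [h0] at this

private lemma L1 : ∀ s : ℝ, 0 < s → Real.sinh s < s * Real.cosh s := by
  have h := pos_of_deriv_pos (fun s => s * Real.cosh s - Real.sinh s)
      (fun s => s * Real.sinh s)
      (fun x => by
        show HasDerivAt _ (x * Real.sinh x) x
        have h := ((hasDerivAt_id x).mul (Real.hasDerivAt_cosh x)).sub (Real.hasDerivAt_sinh x)
        refine h.congr_deriv ?_
        simp; try ring)
      (by simp)
      (fun x hx => by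
        show (0:ℝ) < x * Real.sinh x
        exact mul_pos hx (Real.sinh_pos_iff.2 hx))
  intro s hs
  have hh : 0 < s * Real.cosh s - Real.sinh s := h s hs
  linarith

private lemma L2 : ∀ s : ℝ, 0 < s → 3 * s * Real.cosh s < (s ^ 2 + 3) * Real.sinh s := by
  have h := pos_of_deriv_pos (fun s => (s ^ 2 + 3) * Real.sinh s - 3 * s * Real.cosh s)
      (fun s => s ^ 2 * Real.cosh s - s * Real.sinh s)
      (fun x => by
        show HasDerivAt _ (x ^ 2 * Real.cosh x - x * Real.sinh x) x
        have h := (((hasDerivAt_pow 2 x).add_const 3).mul (Real.hasDerivAt_sinh x)).sub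
          (((hasDerivAt_id x).const_mul 3).mul (Real.hasDerivAt_cosh x))
        refine h.congr_deriv ?_
        simp; try ring)
      (by simp)
      (fun x hx => by
        show (0:ℝ) < x ^ 2 * Real.cosh x - x * Real.sinh x
        nlinarith [L1 x hx])
  intro s hs
  have hh : 0 < (s ^ 2 + 3) * Real.sinh s - 3 * s * Real.cosh s := h s hs
  linarith

private lemma L3 : ∀ s : ℝ, 0 < s →
    2 * Real.sinh s ^ 2 < s ^ 2 + s * Real.sinh s * Real.cosh s := by
  have hF' := pos_of_deriv_pos
      (fun s => 2 * s + s * Real.cosh s ^ 2 + s * Real.sinh s ^ 2 -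
        3 * Real.sinh s * Real.cosh s)
      (fun s => 2 - 2 * Real.cosh s ^ 2 - 2 * Real.sinh s ^ 2 +
        4 * s * Real.sinh s * Real.cosh s)
      (fun x => by
        show HasDerivAt _ (2 - 2 * Real.cosh x ^ 2 - 2 * Real.sinh x ^ 2 +
          4 * x * Real.sinh x * Real.cosh x) x
        have h1 : HasDerivAt (fun s : ℝ => 2 * s) 2 x := by
          have := (hasDerivAt_id x).const_mul (2:ℝ)
          refine this.congr_deriv ?_; simp; try ring
        have h2 : HasDerivAt (fun s : ℝ => s * Real.cosh s ^ 2)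
            (Real.cosh x ^ 2 + x * (2 * Real.cosh x * Real.sinh x)) x := by
          have := (hasDerivAt_id x).mul ((Real.hasDerivAt_cosh x).pow 2)
          refine this.congr_deriv ?_; simp; try ring
        have h3 : HasDerivAt (fun s : ℝ => s * Real.sinh s ^ 2)
            (Real.sinh x ^ 2 + x * (2 * Real.sinh x * Real.cosh x)) x := by
          have := (hasDerivAt_id x).mul ((Real.hasDerivAt_sinh x).pow 2)
          refine this.congr_deriv ?_; simp; try ring
        have h4 : HasDerivAt (fun s : ℝ => 3 * Real.sinh s * Real.cosh s)
            (3 * Real.cosh x * Real.cosh x + 3 * Real.sinh x * Real.sinh x) x := by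
          have := ((Real.hasDerivAt_sinh x).const_mul (3:ℝ)).mul (Real.hasDerivAt_cosh x)
          refine this.congr_deriv ?_; try ring
        have h := ((h1.add h2).add h3).sub h4
        refine h.congr_deriv ?_
        ring)
      (by simp)
      (fun x hx => by
        show (0:ℝ) < 2 - 2 * Real.cosh x ^ 2 - 2 * Real.sinh x ^ 2 +
          4 * x * Real.sinh x * Real.cosh x
        nlinarith [L1 x hx, Real.sinh_pos_iff.2 hx, Real.cosh_sq x])
  have hF := pos_of_deriv_pos
      (fun s => s ^ 2 + s * Real.sinh s * Real.cosh s - 2 * Real.sinh s ^ 2)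
      (fun s => 2 * s + s * Real.cosh s ^ 2 + s * Real.sinh s ^ 2 -
        3 * Real.sinh s * Real.cosh s)
      (fun x => by
        show HasDerivAt _ (2 * x + x * Real.cosh x ^ 2 + x * Real.sinh x ^ 2 -
          3 * Real.sinh x * Real.cosh x) x
        have h1 : HasDerivAt (fun s : ℝ => s ^ 2) (2 * x) x := by
          have := hasDerivAt_pow 2 x
          refine this.congr_deriv ?_; simp; try ring
        have h2 : HasDerivAt (fun s : ℝ => s * Real.sinh s * Real.cosh s)
            ((Real.sinh x + x * Real.cosh x) * Real.cosh x +
              x * Real.sinh x * Real.sinh x) x := by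
          have := (((hasDerivAt_id x).mul (Real.hasDerivAt_sinh x)).mul (Real.hasDerivAt_cosh x))
          refine this.congr_deriv ?_; simp; try ring
        have h3 : HasDerivAt (fun s : ℝ => 2 * Real.sinh s ^ 2)
            (2 * (2 * Real.sinh x * Real.cosh x)) x := by
          have := ((Real.hasDerivAt_sinh x).pow 2).const_mul (2:ℝ)
          refine this.congr_deriv ?_; simp; try ring
        have h := (h1.add h2).sub h3
        refine h.congr_deriv ?_
        ring)
      (by simp)
      (fun x hx => hF' x hx)
  intro s hs
  have hh : 0 < s ^ 2 + s * Real.sinh s * Real.cosh s - 2 * Real.sinh s ^ 2 := hF s hs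
  linarith

/-- sinh/cosh form of the ratio -/
noncomputable def Gfun (s : ℝ) : ℝ :=
  3 * (s * Real.cosh s - Real.sinh s) / (s ^ 2 * Real.sinh s)

private lemma G_deriv {s : ℝ} (hs : 0 < s) :
    HasDerivAt Gfun
      ((3 * (1 * Real.cosh s + s * Real.sinh s - Real.cosh s) * (s ^ 2 * Real.sinh s) -
        3 * (s * Real.cosh s - Real.sinh s) *
          (2 * s * Real.sinh s + s ^ 2 * Real.cosh s)) / (s ^ 2 * Real.sinh s) ^ 2) s := by
  have hsh : 0 < Real.sinh s := Real.sinh_pos_iff.2 hs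
  have hden : s ^ 2 * Real.sinh s ≠ 0 := by positivity
  have hN : HasDerivAt (fun s : ℝ => 3 * (s * Real.cosh s - Real.sinh s))
      (3 * (1 * Real.cosh s + s * Real.sinh s - Real.cosh s)) s :=
    (((hasDerivAt_id s).mul (Real.hasDerivAt_cosh s)).sub (Real.hasDerivAt_sinh s)).const_mul 3
  have hD : HasDerivAt (fun s : ℝ => s ^ 2 * Real.sinh s)
      (2 * s * Real.sinh s + s ^ 2 * Real.cosh s) s := by
    have := (hasDerivAt_pow 2 s).mul (Real.hasDerivAt_sinh s)
    refine this.congr_deriv ?_; simp; try ring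
  exact hN.div hD hden

private lemma G_anti : StrictAntiOn Gfun (Set.Ioi 0) := by
  apply strictAntiOn_of_deriv_neg (convex_Ioi 0)
  · intro s hs
    exact ((G_deriv hs).continuousAt).continuousWithinAt
  · intro s hs
    rw [interior_Ioi, Set.mem_Ioi] at hs
    rw [(G_deriv hs).deriv]
    have hsh : 0 < Real.sinh s := Real.sinh_pos_iff.2 hs
    apply div_neg_of_neg_of_pos
    · have heq : 3 * (1 * Real.cosh s + s * Real.sinh s - Real.cosh s) * (s ^ 2 * Real.sinh s) -
          3 * (s * Real.cosh s - Real.sinh s) * (2 * s * Real.sinh s + s ^ 2 * Real.cosh s) =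
          -3 * s * (s ^ 2 + s * Real.sinh s * Real.cosh s - 2 * Real.sinh s ^ 2) := by
        linear_combination (-3 * s ^ 3) * Real.cosh_sq s
      rw [heq]
      have := L3 s hs
      nlinarith
    · positivity

private lemma G_bounds {s : ℝ} (hs : 0 < s) : 0 < Gfun s ∧ Gfun s < 1 := by
  have hsh : 0 < Real.sinh s := Real.sinh_pos_iff.2 hs
  have hden : 0 < s ^ 2 * Real.sinh s := by positivity
  unfold Gfun
  constructor
  · apply div_pos _ hden
    nlinarith [L1 s hs]
  · rw [div_lt_one hden]
    nlinarith [L2 s hs]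

private lemma G_eq {B : ℝ} (hB : 0 < B) :
    3 * (Real.sqrt B - Real.tanh (Real.sqrt B)) / (B * Real.tanh (Real.sqrt B)) =
      Gfun (Real.sqrt B) := by
  have hs : 0 < Real.sqrt B := Real.sqrt_pos.2 hB
  have hB' : (Real.sqrt B) ^ 2 = B := Real.sq_sqrt hB.le
  have hch : 0 < Real.cosh (Real.sqrt B) := Real.cosh_pos _
  have hsh : 0 < Real.sinh (Real.sqrt B) := Real.sinh_pos_iff.2 hs
  rw [Real.tanh_eq_sinh_div_cosh]
  unfold Gfun
  rw [← hB']
  field_simp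
  rw [Real.sqrt_sq hs.le]
  try ring

private lemma G_le {s : ℝ} (hs : 1 ≤ s) : Gfun s ≤ 6 / s := by
  have hs0 : (0:ℝ) < s := lt_of_lt_of_le one_pos hs
  have hsh : 0 < Real.sinh s := Real.sinh_pos_iff.2 hs0
  have hch : Real.cosh s ≤ 2 * Real.sinh s := by
    rw [Real.cosh_eq, Real.sinh_eq]
    have h1 : (3:ℝ) ≤ Real.exp s * Real.exp s := by
      have h2 : (2:ℝ) ≤ Real.exp 1 := by
        have := Real.add_one_le_exp (1:ℝ); linarith
      have h3 : Real.exp 1 ≤ Real.exp s := Real.exp_le_exp.2 hs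
      nlinarith
    have h4 : Real.exp (-s) * (Real.exp s * Real.exp s) = Real.exp s := by
      rw [← Real.exp_add, ← Real.exp_add]; norm_num
    have h5 : 3 * Real.exp (-s) ≤ Real.exp s := by
      have h6 := mul_le_mul_of_nonneg_left h1 (Real.exp_pos (-s)).le
      calc 3 * Real.exp (-s) = Real.exp (-s) * 3 := by ring
        _ ≤ Real.exp (-s) * (Real.exp s * Real.exp s) := h6
        _ = Real.exp s := h4
    linarith
  rw [Gfun, div_le_div_iff₀ (by positivity) hs0]
  nlinarith [L1 s hs0, mul_pos hs0 hsh]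

theorem lamStar0_monotone_limit (A : ℝ) (hA : 0 < A) :
    (∀ B : ℝ, 0 < B →
      0 < 3 * (Real.sqrt B - Real.tanh (Real.sqrt B)) / (B * Real.tanh (Real.sqrt B)) ∧
      3 * (Real.sqrt B - Real.tanh (Real.sqrt B)) / (B * Real.tanh (Real.sqrt B)) < 1) ∧
    StrictAntiOn (lamStar0 A) (Set.Ioi 0) ∧
    Filter.Tendsto (lamStar0 A) Filter.atTop (nhds (3 * A / 2)) := by
  have hbnd : ∀ B : ℝ, 0 < B →
      0 < 3 * (Real.sqrt B - Real.tanh (Real.sqrt B)) / (B * Real.tanh (Real.sqrt B)) ∧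
      3 * (Real.sqrt B - Real.tanh (Real.sqrt B)) / (B * Real.tanh (Real.sqrt B)) < 1 := by
    intro B hB
    rw [G_eq hB]
    exact G_bounds (Real.sqrt_pos.2 hB)
  refine ⟨hbnd, ?_, ?_⟩
  · intro B₁ hB₁ B₂ hB₂ hlt
    rw [Set.mem_Ioi] at hB₁ hB₂
    have h1 := hbnd B₁ hB₁
    have h2 := hbnd B₂ hB₂
    have hG : 3 * (Real.sqrt B₂ - Real.tanh (Real.sqrt B₂)) / (B₂ * Real.tanh (Real.sqrt B₂)) <
        3 * (Real.sqrt B₁ - Real.tanh (Real.sqrt B₁)) / (B₁ * Real.tanh (Real.sqrt B₁)) := by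
      rw [G_eq hB₁, G_eq hB₂]
      exact G_anti (Set.mem_Ioi.2 (Real.sqrt_pos.2 hB₁)) (Set.mem_Ioi.2 (Real.sqrt_pos.2 hB₂))
        (Real.sqrt_lt_sqrt hB₁.le hlt)
    unfold lamStar0
    apply mul_lt_mul_of_pos_left _ (by positivity)
    apply inv_strictAnti₀ (by linarith) (by linarith)
  · -- limit
    have hGt : Filter.Tendsto (fun B => Gfun (Real.sqrt B)) Filter.atTop (nhds 0) := by
      have hsq : Filter.Tendsto Real.sqrt Filter.atTop Filter.atTop := by
        apply Filter.tendsto_atTop_atTop.2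
        intro b
        refine ⟨max (b ^ 2) 0, fun a ha => ?_⟩
        have : Real.sqrt (b ^ 2) ≤ Real.sqrt a :=
          Real.sqrt_le_sqrt (le_trans (le_max_left _ _) ha)
        calc b ≤ |b| := le_abs_self b
          _ = Real.sqrt (b ^ 2) := (Real.sqrt_sq_eq_abs b).symm
          _ ≤ Real.sqrt a := this
      have hup : Filter.Tendsto (fun B => 6 / Real.sqrt B) Filter.atTop (nhds 0) :=
        Filter.Tendsto.div_atTop tendsto_const_nhds hsq
      apply tendsto_of_tendsto_of_tendsto_of_le_of_le' tendsto_const_nhds hup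
      · filter_upwards [Filter.eventually_ge_atTop (1:ℝ)] with B hB
        exact (G_bounds (Real.sqrt_pos.2 (lt_of_lt_of_le one_pos hB))).1.le
      · filter_upwards [Filter.eventually_ge_atTop (1:ℝ)] with B hB
        exact G_le (by rw [show (1:ℝ) = Real.sqrt 1 by simp]; exact Real.sqrt_le_sqrt hB)
    have hmain : Filter.Tendsto (fun B => (3 * A / 2) * (1 - Gfun (Real.sqrt B))⁻¹)
        Filter.atTop (nhds (3 * A / 2)) := by
      have h1 : Filter.Tendsto (fun B => (1 - Gfun (Real.sqrt B))⁻¹) Filter.atTop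
          (nhds ((1 - (0:ℝ))⁻¹)) :=
        (tendsto_const_nhds.sub hGt).inv₀ (by norm_num)
      have h2 : Filter.Tendsto (fun B => (3 * A / 2) * (1 - Gfun (Real.sqrt B))⁻¹)
          Filter.atTop (nhds ((3 * A / 2) * (1 - (0:ℝ))⁻¹)) := tendsto_const_nhds.mul h1
      simpa using h2
    apply hmain.congr'
    filter_upwards [Filter.eventually_gt_atTop (0:ℝ)] with B hB
    rw [lamStar0, G_eq hB]
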